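/- Let m and n be positive integers with n ≥ m, let β₁, …, β_m be distinct complex numbers, and put G(x) = (x−β₁)⋯(x−β_m). An entire function F: ℂ → ℂ satisfies the differential equation Σ_{i=0}^{m} (−1)^i · C(n−m+i, i) · G^{(i)}(x) · F^{(m−i)}(x) = 0 for all x ∈ ℂ if and only if F(x) = Σ_{i=1}^{m} γ_i (x−β_i)ⁿ for some complex numbers γ₁, …, γ_m. Here C(n−m+i, i) denotes the binomial coefficient and G^{(i)}, F^{(m−i)} denote derivatives. -/

import Mathlib

noncomputable section
open scoped BigOperators
open Finset Polynomial

private lemma diffIter {f : ℂ → ℂ} (hf : Differentiable ℂ f) (k : ℕ) :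
    Differentiable ℂ (iteratedDeriv k f) :=
  (Differentiable.contDiff hf (n := (⊤ : WithTop ℕ∞))).differentiable_iteratedDeriv k (by simp)

private lemma iteratedDeriv_eval (p : Polynomial ℂ) (k : ℕ) :
    iteratedDeriv k (fun z => p.eval z) = fun z => (derivative^[k] p).eval z := by
  induction k with
  | zero => simp
  | succ k ih =>
    rw [iteratedDeriv_succ, ih]
    funext z
    rw [Function.iterate_succ_apply']
    exact Polynomial.deriv (p := derivative^[k] p)

private lemma iteratedDeriv_zero_fun (k : ℕ) :
    iteratedDeriv k (fun _ : ℂ => (0 : ℂ)) = fun _ => (0 : ℂ) := by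
  induction k with
  | zero => simp
  | succ k ih => rw [iteratedDeriv_succ, ih]; funext z; simp

private lemma iteratedDeriv_add' {f g : ℂ → ℂ} (hf : Differentiable ℂ f)
    (hg : Differentiable ℂ g) (k : ℕ) (x : ℂ) :
    iteratedDeriv k (fun z => f z + g z) x = iteratedDeriv k f x + iteratedDeriv k g x := by
  have h : (fun z => f z + g z) = f + g := rfl
  rw [h, iteratedDeriv_eq_iteratedFDeriv, iteratedDeriv_eq_iteratedFDeriv,
    iteratedDeriv_eq_iteratedFDeriv,
    iteratedFDeriv_add_apply (hf.contDiff.contDiffAt) (hg.contDiff.contDiffAt)]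
  simp

private lemma iteratedDeriv_cmul {f : ℂ → ℂ} (hf : Differentiable ℂ f) (c : ℂ) (k : ℕ) (x : ℂ) :
    iteratedDeriv k (fun z => c * f z) x = c * iteratedDeriv k f x := by
  have h : (fun z => c * f z) = fun z => c • f z := rfl
  rw [h, iteratedDeriv_eq_iteratedFDeriv, iteratedDeriv_eq_iteratedFDeriv,
    iteratedFDeriv_const_smul_apply' (a := c) (hf.contDiff.contDiffAt)]
  simp

private lemma iteratedDeriv_fsum {ι : Type*} (s : Finset ι) (u : ι → ℂ → ℂ)
    (hu : ∀ j ∈ s, Differentiable ℂ (u j)) (k : ℕ) (x : ℂ) :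
    iteratedDeriv k (fun z => ∑ j ∈ s, u j z) x = ∑ j ∈ s, iteratedDeriv k (u j) x := by
  induction s using Finset.cons_induction with
  | empty => simp [iteratedDeriv_zero_fun]
  | cons a s ha ih =>
    have h : (fun z => ∑ j ∈ Finset.cons a s ha, u j z)
        = fun z => u a z + (fun w => ∑ j ∈ s, u j w) z := by
      funext z; simp [Finset.sum_cons]
    rw [h, iteratedDeriv_add' (hu a (Finset.mem_cons_self a _ ..))
      (Differentiable.fun_sum fun j hj => hu j (Finset.mem_cons_of_mem hj)) k x,
      Finset.sum_cons, ih (fun j hj => hu j (Finset.mem_cons_of_mem hj))]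

private lemma coeff_id {m n i : ℕ} (hi : i ≤ m) (hmn : m ≤ n) :
    (n - m + i).choose i * (Nat.factorial i) * n.descFactorial (m - i) = n.descFactorial m := by
  apply Nat.eq_of_mul_eq_mul_left (Nat.factorial_pos (n - m))
  have h1 : (Nat.factorial (n - m)) * n.descFactorial m = (Nat.factorial n) :=
    Nat.factorial_mul_descFactorial hmn
  have h2 : (n - m + i).choose i * (Nat.factorial i) * (Nat.factorial (n - m))
      = (Nat.factorial (n - m + i)) := by
    have := Nat.choose_mul_factorial_mul_factorial (Nat.le_add_left i (n - m))
    simpa [Nat.add_sub_cancel] using this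
  have h3 : (Nat.factorial (n - (m - i))) * n.descFactorial (m - i) = (Nat.factorial n) :=
    Nat.factorial_mul_descFactorial (le_trans (Nat.sub_le m i) hmn)
  have h4 : n - (m - i) = n - m + i := by omega
  calc (Nat.factorial (n - m)) * ((n - m + i).choose i * (Nat.factorial i) * n.descFactorial (m - i))
      = ((n - m + i).choose i * (Nat.factorial i) * (Nat.factorial (n - m))) * n.descFactorial (m - i) := by
        ring
    _ = (Nat.factorial (n - m + i)) * n.descFactorial (m - i) := by rw [h2]
    _ = (Nat.factorial (n - (m - i))) * n.descFactorial (m - i) := by rw [h4]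
    _ = (Nat.factorial n) := h3
    _ = (Nat.factorial (n - m)) * n.descFactorial m := h1.symm

private lemma taylor_sum' (g : Polynomial ℂ) (N : ℕ) (hN : g.natDegree ≤ N) (z b : ℂ) :
    ∑ i ∈ range (N + 1), (hasseDeriv i g).eval z * (b - z) ^ i = g.eval b := by
  have h1 : g.eval b = (taylor z g).eval (b - z) := (taylor_eval_sub z g b).symm
  rw [h1, Polynomial.eval_eq_sum_range' (n := N + 1)
      (lt_of_le_of_lt (by rw [natDegree_taylor]; exact hN) (Nat.lt_succ_self N))]
  exact Finset.sum_congr rfl fun i _ => by rw [taylor_coeff]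

private lemma derivIter_eq_hasse (g : Polynomial ℂ) (i : ℕ) (z : ℂ) :
    (derivative^[i] g).eval z = (Nat.factorial i : ℂ) * (hasseDeriv i g).eval z := by
  have := congrFun (Polynomial.factorial_smul_hasseDeriv (R := ℂ) i) g
  rw [← this]
  simp [nsmul_eq_mul]

private lemma pow_diff : ∀ (b : ℂ) (n : ℕ), Differentiable ℂ (fun w : ℂ => (w - b) ^ n) :=
  fun b n => (differentiable_id.sub_const b).pow n

private lemma iteratedDeriv_sub_pow (b : ℂ) (n k : ℕ) (z : ℂ) :
    iteratedDeriv k (fun w : ℂ => (w - b) ^ n) z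
      = (n.descFactorial k : ℂ) * (z - b) ^ (n - k) := by
  have h : (fun w : ℂ => (w - b) ^ n) = fun w => ((X - C b) ^ n : Polynomial ℂ).eval w := by
    funext w; simp
  rw [h, iteratedDeriv_eval, Polynomial.iterate_derivative_X_sub_pow]
  simp [nsmul_eq_mul]

private lemma P_solves (m n : ℕ) (hmn : m ≤ n) (β : Fin m → ℂ) (γ : Fin m → ℂ)
    (G : ℂ → ℂ) (hG : G = fun z => ∏ i, (z - β i)) (z : ℂ) :
    ∑ i ∈ Finset.range (m + 1),
        (-1 : ℂ) ^ i * (Nat.choose (n - m + i) i : ℂ) *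
          iteratedDeriv i G z
          * iteratedDeriv (m - i) (fun w => ∑ j, γ j * (w - β j) ^ n) z = 0 := by
  set g : Polynomial ℂ := ∏ j, (X - C (β j)) with hg
  have hGg : G = fun z => g.eval z := by
    rw [hG]; funext w; rw [hg, Polynomial.eval_prod]; simp
  have hdeg : g.natDegree = m := by
    rw [hg, Polynomial.natDegree_prod _ _ (fun j _ => Polynomial.X_sub_C_ne_zero (β j))]
    simp [Polynomial.natDegree_X_sub_C]
  have hGi : ∀ (i : ℕ) (w : ℂ), iteratedDeriv i G w = (derivative^[i] g).eval w := by
    intro i w; rw [hGg, iteratedDeriv_eval]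
  have hPd : ∀ i : ℕ, iteratedDeriv (m - i) (fun w => ∑ j, γ j * (w - β j) ^ n) z
      = ∑ j, γ j * ((n.descFactorial (m - i) : ℂ) * (z - β j) ^ (n - (m - i))) := by
    intro i
    rw [iteratedDeriv_fsum Finset.univ (fun j w => γ j * (w - β j) ^ n)
      (fun j _ => (pow_diff (β j) n).const_mul (γ j)) (m - i) z]
    exact Finset.sum_congr rfl fun j _ => by
      rw [iteratedDeriv_cmul (pow_diff (β j) n) (γ j) (m - i) z,
        iteratedDeriv_sub_pow (β j) n (m - i) z]
  calc ∑ i ∈ Finset.range (m + 1),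
        (-1 : ℂ) ^ i * (Nat.choose (n - m + i) i : ℂ) * iteratedDeriv i G z
          * iteratedDeriv (m - i) (fun w => ∑ j, γ j * (w - β j) ^ n) z
      = ∑ i ∈ Finset.range (m + 1), ∑ j,
          γ j * (n.descFactorial m : ℂ) * (z - β j) ^ (n - m)
            * ((hasseDeriv i g).eval z * (β j - z) ^ i) := by
        refine Finset.sum_congr rfl fun i hi => ?_
        have him : i ≤ m := Nat.lt_succ_iff.mp (Finset.mem_range.mp hi)
        rw [hPd i, Finset.mul_sum]
        refine Finset.sum_congr rfl fun j _ => ?_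
        rw [hGi i z, derivIter_eq_hasse]
        have hexp : n - (m - i) = n - m + i := by omega
        have hpow : (z - β j) ^ (n - (m - i)) = (z - β j) ^ (n - m) * (z - β j) ^ i := by
          rw [hexp, pow_add]
        have hsign : (β j - z) ^ i = (-1 : ℂ) ^ i * (z - β j) ^ i := by
          rw [← neg_sub z (β j), neg_pow]
        have hcoeff : ((n - m + i).choose i : ℂ) * (Nat.factorial i : ℂ)
            * (n.descFactorial (m - i) : ℂ) = (n.descFactorial m : ℂ) := by
          exact_mod_cast congrArg (Nat.cast (R := ℂ)) (coeff_id him hmn)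
        rw [hpow, hsign]
        linear_combination ((-1 : ℂ) ^ i * (z - β j) ^ (n - m) * (z - β j) ^ i * γ j
          * (hasseDeriv i g).eval z) * hcoeff
    _ = ∑ j, γ j * (n.descFactorial m : ℂ) * (z - β j) ^ (n - m)
          * (∑ i ∈ Finset.range (m + 1), (hasseDeriv i g).eval z * (β j - z) ^ i) := by
        rw [Finset.sum_comm]
        exact Finset.sum_congr rfl fun j _ => by rw [Finset.mul_sum]
    _ = 0 := by
        refine Finset.sum_eq_zero fun j _ => ?_
        rw [taylor_sum' g m (le_of_eq hdeg) z (β j)]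
        have : g.eval (β j) = 0 := by
          rw [hg, Polynomial.eval_prod]
          exact Finset.prod_eq_zero (Finset.mem_univ j) (by simp)
        rw [this, mul_zero]

private lemma iteratedDeriv_mul' {f g : ℂ → ℂ} (hf : Differentiable ℂ f)
    (hg : Differentiable ℂ g) (k : ℕ) :
    ∀ x : ℂ, iteratedDeriv k (fun z => f z * g z) x
      = ∑ l ∈ range (k + 1), (k.choose l : ℂ) *
          (iteratedDeriv l f x * iteratedDeriv (k - l) g x) := by
  induction k with
  | zero => intro x; simp
  | succ k ih =>
    intro x
    have hfun : iteratedDeriv k (fun z => f z * g z)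
        = fun x => ∑ l ∈ range (k + 1), (k.choose l : ℂ) *
            (iteratedDeriv l f x * iteratedDeriv (k - l) g x) := funext ih
    have hdterm : ∀ l, DifferentiableAt ℂ
        (fun x => (k.choose l : ℂ) * (iteratedDeriv l f x * iteratedDeriv (k - l) g x)) x :=
      fun l => (((diffIter hf l).mul (diffIter hg (k - l))).const_mul _).differentiableAt
    rw [iteratedDeriv_succ, hfun, deriv_fun_sum (fun l _ => hdterm l)]
    have hderiv : ∀ l ∈ range (k + 1),
        deriv (fun x => (k.choose l : ℂ) * (iteratedDeriv l f x * iteratedDeriv (k - l) g x)) x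
          = (k.choose l : ℂ) * (iteratedDeriv (l + 1) f x * iteratedDeriv (k - l) g x)
            + (k.choose l : ℂ) * (iteratedDeriv l f x * iteratedDeriv (k - l + 1) g x) := by
      intro l _
      rw [deriv_const_mul _ (((diffIter hf l).fun_mul (diffIter hg (k - l))).differentiableAt),
        deriv_fun_mul ((diffIter hf l).differentiableAt) ((diffIter hg (k - l)).differentiableAt),
        ← iteratedDeriv_succ, ← iteratedDeriv_succ]
      ring
    rw [Finset.sum_congr rfl hderiv, Finset.sum_add_distrib]
    -- abbreviation
    set A : ℕ → ℂ := fun l => iteratedDeriv l f x * iteratedDeriv (k + 1 - l) g x with hA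
    have e1 : ∑ l ∈ range (k + 1), (k.choose l : ℂ) *
        (iteratedDeriv (l + 1) f x * iteratedDeriv (k - l) g x)
        = ∑ l ∈ range (k + 1), (k.choose l : ℂ) * A (l + 1) := by
      refine Finset.sum_congr rfl fun l hl => ?_
      have : k - l = k + 1 - (l + 1) := by omega
      rw [hA]; simp only []; rw [this]
    have e2 : ∑ l ∈ range (k + 1), (k.choose l : ℂ) *
        (iteratedDeriv l f x * iteratedDeriv (k - l + 1) g x)
        = ∑ l ∈ range (k + 1), (k.choose l : ℂ) * A l := by
      refine Finset.sum_congr rfl fun l hl => ?_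
      have : k - l + 1 = k + 1 - l := by
        have := Finset.mem_range.1 hl; omega
      rw [hA]; simp only []; rw [this]
    rw [e1, e2]
    -- now RHS
    have target : ∑ l ∈ range (k + 2), ((k+1).choose l : ℂ) * A l
        = ∑ l ∈ range (k + 1), (k.choose l : ℂ) * A (l + 1)
          + ∑ l ∈ range (k + 1), (k.choose l : ℂ) * A l := by
      rw [Finset.sum_range_succ' (fun l => ((k+1).choose l : ℂ) * A l)]
      have : ∀ l ∈ range (k + 1), ((k+1).choose (l+1) : ℂ) * A (l+1)
          = (k.choose l : ℂ) * A (l+1) + (k.choose (l+1) : ℂ) * A (l+1) := by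
        intro l _
        rw [Nat.choose_succ_succ]
        push_cast
        ring
      rw [Finset.sum_congr rfl this, Finset.sum_add_distrib]
      have e3 : ∑ l ∈ range (k + 1), (k.choose (l+1) : ℂ) * A (l+1) + ((k+1).choose 0 : ℂ) * A 0
          = ∑ l ∈ range (k + 1), (k.choose l : ℂ) * A l := by
        rw [Nat.choose_zero_right]
        have : ((1:ℕ) : ℂ) * A 0 = (k.choose 0 : ℂ) * A 0 := by simp
        rw [this, ← Finset.sum_range_succ' (fun l => (k.choose l : ℂ) * A l),
          Finset.sum_range_succ, Nat.choose_succ_self]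
        simp
      rw [add_assoc, e3]
    exact target.symm


private lemma iteratedDeriv_sub' {f g : ℂ → ℂ} (hf : Differentiable ℂ f)
    (hg : Differentiable ℂ g) (k : ℕ) (x : ℂ) :
    iteratedDeriv k (fun z => f z - g z) x = iteratedDeriv k f x - iteratedDeriv k g x := by
  have h : (fun z => f z - g z) = fun z => f z + (fun w => -g w) z := by
    funext z; simp [sub_eq_add_neg]
  rw [h, iteratedDeriv_add' hf (by exact hg.neg) k x, iteratedDeriv_fun_neg]
  ring

private lemma iteratedDeriv_comp_iteratedDeriv (f : ℂ → ℂ) (i l : ℕ) :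
    iteratedDeriv l (iteratedDeriv i f) = iteratedDeriv (i + l) f := by
  induction l with
  | zero => simp
  | succ l ih =>
    rw [iteratedDeriv_succ, ih, ← Nat.add_assoc, ← iteratedDeriv_succ]


private lemma reverse_dir (m n : ℕ) (hm : 0 < m) (hmn : m ≤ n)
    (β : Fin m → ℂ) (hβ : Function.Injective β)
    (G : ℂ → ℂ) (hG : G = fun z => ∏ i, (z - β i))
    (F : ℂ → ℂ) (hF : Differentiable ℂ F)
    (hode : ∀ z : ℂ, ∑ i ∈ Finset.range (m + 1),
        (-1 : ℂ) ^ i * (Nat.choose (n - m + i) i : ℂ) *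
          iteratedDeriv i G z * iteratedDeriv (m - i) F z = 0) :
    ∃ γ : Fin m → ℂ, F = fun z => ∑ i, γ i * (z - β i) ^ n := by
  classical
  -- choose a base point avoiding the roots
  obtain ⟨x₀, hx₀⟩ : ∃ x₀ : ℂ, x₀ ∉ Set.range β :=
    Set.Infinite.nonempty ((Set.finite_range β).infinite_compl)
  set w : Fin m → ℂ := fun j => x₀ - β j with hw
  have hwne : ∀ j, w j ≠ 0 := by
    intro j
    rw [hw]
    exact sub_ne_zero.mpr fun h => hx₀ ⟨j, h.symm⟩
  have hwinj : Function.Injective w := by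
    intro a b hab
    exact hβ (by linear_combination -hab : β a = β b)
  -- the Vandermonde-type matrix
  set M : Matrix (Fin m) (Fin m) ℂ :=
    ((Matrix.vandermonde w).transpose).submatrix (Fin.revPerm) id with hM
  have hMentry : ∀ k j : Fin m, M k j = w j ^ (m - 1 - (k : ℕ)) := by
    intro k j
    rw [hM]
    simp only [Matrix.submatrix_apply, Matrix.transpose_apply, Matrix.vandermonde_apply, id]
    congr 1
    rw [Fin.revPerm_apply, Fin.val_rev]
    omega
  have hdetV : (Matrix.vandermonde w).det ≠ 0 := by
    rw [Ne, Matrix.det_vandermonde_eq_zero_iff]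
    rintro ⟨i, j, hij, hne⟩
    exact hne (hwinj hij)
  have hdetM : M.det ≠ 0 := by
    rw [hM, Matrix.det_permute]
    simp only [Matrix.det_transpose]
    rcases Int.units_eq_one_or (Equiv.Perm.sign (Fin.revPerm (n := m))) with h | h <;>
      simp [h, hdetV]
  -- solve for the coefficients via the inverse matrix
  set b : Fin m → ℂ := fun k => iteratedDeriv (k : ℕ) F x₀ / (n.descFactorial (k : ℕ) : ℂ) with hb
  set δ : Fin m → ℂ := (M⁻¹).mulVec b with hδ
  have hMδ : M.mulVec δ = b := by
    rw [hδ, Matrix.mulVec_mulVec, Matrix.mul_nonsing_inv _ (isUnit_iff_ne_zero.mpr hdetM),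
      Matrix.one_mulVec]
  set γ : Fin m → ℂ := fun j => δ j / w j ^ (n - m + 1) with hγ
  set P : ℂ → ℂ := fun z => ∑ j, γ j * (z - β j) ^ n with hP
  have hPdiff : Differentiable ℂ P := by
    rw [hP]
    exact Differentiable.fun_sum fun j _ => ((pow_diff (β j) n).const_mul (γ j))
  have hPder : ∀ κ : ℕ, iteratedDeriv κ P x₀
      = ∑ j, γ j * ((n.descFactorial κ : ℂ) * (x₀ - β j) ^ (n - κ)) := by
    intro κ
    rw [hP, iteratedDeriv_fsum Finset.univ (fun j w => γ j * (w - β j) ^ n)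
      (fun j _ => (pow_diff (β j) n).const_mul (γ j)) κ x₀]
    exact Finset.sum_congr rfl fun j _ => by
      rw [iteratedDeriv_cmul (pow_diff (β j) n) (γ j) κ x₀, iteratedDeriv_sub_pow (β j) n κ x₀]
  have hinit : ∀ κ : ℕ, κ < m → iteratedDeriv κ P x₀ = iteratedDeriv κ F x₀ := by
    intro κ hκ
    have hdFne : (n.descFactorial κ : ℂ) ≠ 0 := by
      have : n.descFactorial κ ≠ 0 := by
        rw [Ne, Nat.descFactorial_eq_zero_iff_lt]
        omega
      exact_mod_cast this
    rw [hPder κ]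
    have hstep : ∀ j : Fin m, γ j * ((n.descFactorial κ : ℂ) * (x₀ - β j) ^ (n - κ))
        = (n.descFactorial κ : ℂ) * (M ⟨κ, hκ⟩ j * δ j) := by
      intro j
      rw [hMentry ⟨κ, hκ⟩ j, hγ]
      simp only []
      have hwj : (x₀ - β j) = w j := rfl
      have hsplit : w j ^ (n - κ) = w j ^ (n - m + 1) * w j ^ (m - 1 - κ) := by
        rw [← pow_add]
        congr 1
        omega
      rw [hwj, hsplit]
      have hwp : w j ^ (n - m + 1) ≠ 0 := pow_ne_zero _ (hwne j)
      field_simp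
    rw [Finset.sum_congr rfl fun j _ => hstep j, ← Finset.mul_sum]
    have hmv : ∑ j, M ⟨κ, hκ⟩ j * δ j = M.mulVec δ ⟨κ, hκ⟩ := by
      simp [Matrix.mulVec, dotProduct]
    rw [hmv, hMδ, hb]
    simp only []
    rw [mul_comm, div_mul_cancel₀ _ hdFne]
  -- the difference h satisfies the same ODE with zero initial data at x₀
  set h : ℂ → ℂ := fun z => F z - P z with hh
  have hhdiff : Differentiable ℂ h := hF.sub hPdiff
  have hodeh : ∀ z : ℂ, ∑ i ∈ Finset.range (m + 1),
      (-1 : ℂ) ^ i * (Nat.choose (n - m + i) i : ℂ) *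
        iteratedDeriv i G z * iteratedDeriv (m - i) h z = 0 := by
    intro z
    have hPode := P_solves m n hmn β γ G hG z
    rw [← hP] at hPode
    calc ∑ i ∈ Finset.range (m + 1), (-1:ℂ)^i * (Nat.choose (n-m+i) i : ℂ) *
          iteratedDeriv i G z * iteratedDeriv (m - i) h z
        = ∑ i ∈ Finset.range (m + 1), ((-1:ℂ)^i * (Nat.choose (n-m+i) i : ℂ) *
            iteratedDeriv i G z * iteratedDeriv (m - i) F z
          - (-1:ℂ)^i * (Nat.choose (n-m+i) i : ℂ) *
            iteratedDeriv i G z * iteratedDeriv (m - i) P z) := by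
          refine Finset.sum_congr rfl fun i _ => ?_
          rw [hh, iteratedDeriv_sub' hF hPdiff]
          ring
      _ = 0 := by
          rw [Finset.sum_sub_distrib, hode z, hPode, sub_zero]
  set g : Polynomial ℂ := ∏ j, (X - C (β j)) with hgdef
  have hGg : G = fun z => g.eval z := by
    rw [hG]; funext u; rw [hgdef, Polynomial.eval_prod]; simp
  have hGdiff : Differentiable ℂ G := by rw [hGg]; exact Polynomial.differentiable g
  have hGx₀ : G x₀ ≠ 0 := by
    rw [hG]
    exact Finset.prod_ne_zero_iff.mpr fun j _ => hwne j
  have hvanish : ∀ k : ℕ, iteratedDeriv k h x₀ = 0 := by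
    intro k
    induction k using Nat.strong_induction_on with
    | _ k IH =>
      by_cases hk : k < m
      · rw [hh, iteratedDeriv_sub' hF hPdiff, hinit k hk, sub_self]
      · push_neg at hk
        set t : ℕ := k - m with ht
        have hkmt : k = m + t := by omega
        have hzfun : (fun z => ∑ i ∈ Finset.range (m + 1),
            ((-1:ℂ)^i * (Nat.choose (n-m+i) i : ℂ)) *
              (iteratedDeriv i G z * iteratedDeriv (m - i) h z)) = fun _ => (0:ℂ) := by
          funext z
          rw [← hodeh z]
          exact Finset.sum_congr rfl fun i _ => by ring
        have hterms : ∀ i : ℕ, Differentiable ℂ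
            (fun z => ((-1:ℂ)^i * (Nat.choose (n-m+i) i : ℂ)) *
              (iteratedDeriv i G z * iteratedDeriv (m - i) h z)) :=
          fun i => (((diffIter hGdiff i).mul (diffIter hhdiff (m - i))).const_mul _)
        have hexp : iteratedDeriv t (fun z => ∑ i ∈ Finset.range (m + 1),
            ((-1:ℂ)^i * (Nat.choose (n-m+i) i : ℂ)) *
              (iteratedDeriv i G z * iteratedDeriv (m - i) h z)) x₀ = 0 := by
          rw [hzfun, iteratedDeriv_zero_fun]
        rw [iteratedDeriv_fsum _ _ (fun i _ => hterms i) t x₀] at hexp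
        have hterm2 : ∀ i ∈ Finset.range (m+1), iteratedDeriv t
            (fun z => ((-1:ℂ)^i * (Nat.choose (n-m+i) i : ℂ)) *
              (iteratedDeriv i G z * iteratedDeriv (m - i) h z)) x₀
            = ((-1:ℂ)^i * (Nat.choose (n-m+i) i : ℂ)) *
              ∑ l ∈ Finset.range (t+1), (t.choose l : ℂ) *
                (iteratedDeriv (i + l) G x₀ * iteratedDeriv ((m - i) + (t - l)) h x₀) := by
          intro i _
          rw [iteratedDeriv_cmul ((diffIter hGdiff i).fun_mul (diffIter hhdiff (m-i))) _ t x₀,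
            iteratedDeriv_mul' (diffIter hGdiff i) (diffIter hhdiff (m-i)) t x₀]
          congr 1
          refine Finset.sum_congr rfl fun l _ => ?_
          rw [iteratedDeriv_comp_iteratedDeriv, iteratedDeriv_comp_iteratedDeriv]
        rw [Finset.sum_congr rfl hterm2] at hexp
        have hmain : ∑ i ∈ Finset.range (m+1), ((-1:ℂ)^i * (Nat.choose (n-m+i) i : ℂ)) *
              (∑ l ∈ Finset.range (t+1), (t.choose l : ℂ) *
                (iteratedDeriv (i + l) G x₀ * iteratedDeriv ((m - i) + (t - l)) h x₀))
            = G x₀ * iteratedDeriv k h x₀ := by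
          rw [Finset.sum_eq_single_of_mem 0 (Finset.mem_range.mpr (Nat.succ_pos m))]
          · rw [Finset.sum_eq_single_of_mem 0 (Finset.mem_range.mpr (Nat.succ_pos t))]
            · simp only [pow_zero, Nat.choose_zero_right, Nat.cast_one, one_mul,
                Nat.add_zero, Nat.zero_add, Nat.sub_zero, iteratedDeriv_zero, ← hkmt]
            · intro l hl hlne
              simp only [Nat.sub_zero, Nat.zero_add]
              rw [IH (m + (t - l)) (by have := Finset.mem_range.mp hl; omega)]
              ring
          · intro i hi hine
            rw [Finset.sum_eq_zero, mul_zero]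
            intro l hl
            rw [IH ((m - i) + (t - l))
              (by have h1 := Finset.mem_range.mp hi; have h2 := Finset.mem_range.mp hl; omega)]
            ring
        rw [hmain] at hexp
        exact (mul_eq_zero.mp hexp).resolve_left hGx₀
  refine ⟨γ, ?_⟩
  funext z
  have htay := Complex.taylorSeries_eq_of_entire' (c := x₀) (z := z) hhdiff
  have hzero : ∀ k : ℕ, ((Nat.factorial k : ℂ))⁻¹ * iteratedDeriv k h x₀ * (z - x₀) ^ k
      = 0 := by
    intro k
    rw [hvanish k, mul_zero, zero_mul]
  have h0 : h z = 0 := by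
    rw [← htay, tsum_congr hzero, tsum_zero]
  have hFP : F z - P z = 0 := h0
  have : F z = P z := sub_eq_zero.mp hFP
  exact this

/-- **Lemma on the differential equation** (Lemma 2 of the paper): an entire function `F`
satisfies `Σ_{i=0}^m (-1)^i C(n-m+i, i) G^{(i)}(x) F^{(m-i)}(x) = 0` if and only if
`F(x) = Σ_{i=1}^m γᵢ (x - βᵢ)^n` for some complex constants `γᵢ`. -/
theorem diff_eqn_solutions
    (m n : ℕ) (hm : 0 < m) (hmn : m ≤ n)
    (β : Fin m → ℂ) (hβ : Function.Injective β)
    (G : ℂ → ℂ) (hG : G = fun z => ∏ i, (z - β i))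
    (F : ℂ → ℂ) (hF : Differentiable ℂ F) :
    (∀ z : ℂ, ∑ i ∈ Finset.range (m + 1),
        (-1 : ℂ) ^ i * (Nat.choose (n - m + i) i : ℂ) *
          iteratedDeriv i G z * iteratedDeriv (m - i) F z = 0)
      ↔ ∃ γ : Fin m → ℂ, F = fun z => ∑ i, γ i * (z - β i) ^ n := by
  constructor
  · intro hode
    exact reverse_dir m n hm hmn β hβ G hG F hF hode
  · rintro ⟨γ, rfl⟩ z
    exact P_solves m n hmn β γ G hG z
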